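/- Let ≺ be a left-invariant total order on B_3 whose positive cone is exactly the union of the set of σ1-positive elements and the set {σ2^k : k ≥ 1}. Then the ≺-convex subgroups of B_3 are exactly the three subgroups {1}, the cyclic subgroup ⟨σ2⟩ generated by σ2, and B_3 itself. -/

import Mathlib

/-- The single braid relation of `B₃`: σ₁σ₂σ₁ = σ₂σ₁σ₂. -/
def braidRels3 : Set (FreeGroup (Fin 2)) :=
  { FreeGroup.of 0 * FreeGroup.of 1 * FreeGroup.of 0 *
      (FreeGroup.of 1 * FreeGroup.of 0 * FreeGroup.of 1)⁻¹ }

/-- The braid group `B₃ = ⟨σ₁, σ₂ | σ₁σ₂σ₁ = σ₂σ₁σ₂⟩`. -/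
abbrev B₃ : Type := PresentedGroup braidRels3

def σ₁ : B₃ := PresentedGroup.of 0
def σ₂ : B₃ := PresentedGroup.of 1

/-- A left-invariant total order (left order) on a group `G`. -/
def IsLeftOrder {G : Type*} [Group G] (r : G → G → Prop) : Prop :=
  IsStrictTotalOrder G r ∧ ∀ h f g : G, r f g → r (h * f) (h * g)

/-- A subgroup `C` is convex for `r` if `f ≺ g ≺ h` with `f, h ∈ C` implies `g ∈ C`. -/
def IsConvexSubgroup {G : Type*} [Group G] (r : G → G → Prop) (C : Subgroup G) : Prop :=
  ∀ f g h : G, f ∈ C → h ∈ C → r f g → r g h → g ∈ C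

/-- The group element represented by a single letter `σᵢ^{±1}`
(`true` = positive letter, `false` = inverse letter). -/
def letterB₃ (x : Fin 2 × Bool) : B₃ :=
  if x.2 then PresentedGroup.of x.1 else (PresentedGroup.of x.1)⁻¹

/-- An element of `B₃` is σ₁-positive if it is represented by some word in
`σ₁^{±1}, σ₂^{±1}` containing at least one `σ₁` and no `σ₁⁻¹`. -/
def IsSigmaOnePositive (β : B₃) : Prop :=
  ∃ w : List (Fin 2 × Bool),
    (w.map letterB₃).prod = β ∧ ((0 : Fin 2), true) ∈ w ∧ ((0 : Fin 2), false) ∉ w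

lemma braid : σ₁ * σ₂ * σ₁ = σ₂ * σ₁ * σ₂ := by
  have h : PresentedGroup.mk braidRels3
      (FreeGroup.of 0 * FreeGroup.of 1 * FreeGroup.of 0 *
        (FreeGroup.of 1 * FreeGroup.of 0 * FreeGroup.of 1)⁻¹) = 1 := by
    apply (QuotientGroup.eq_one_iff _).2
    exact Subgroup.subset_normalClosure rfl
  simp only [map_mul, map_inv] at h
  have h2 : σ₁ * σ₂ * σ₁ * (σ₂ * σ₁ * σ₂)⁻¹ = 1 := h
  group at h2 ⊢
  exact mul_inv_eq_one.mp h2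

lemma conj1 : σ₁⁻¹ * σ₂ * σ₁ = σ₂ * σ₁ * σ₂⁻¹ := by
  have := braid
  have h : σ₁ * (σ₂ * σ₁ * σ₂⁻¹) = σ₂ * σ₁ := by
    rw [← mul_assoc, ← mul_assoc, this]; group
  calc σ₁⁻¹ * σ₂ * σ₁ = σ₁⁻¹ * (σ₂ * σ₁) := by group
    _ = σ₁⁻¹ * (σ₁ * (σ₂ * σ₁ * σ₂⁻¹)) := by rw [h]
    _ = σ₂ * σ₁ * σ₂⁻¹ := by group

lemma letter_0t : letterB₃ (0, true) = σ₁ := rfl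
lemma letter_0f : letterB₃ (0, false) = σ₁⁻¹ := rfl
lemma letter_1t : letterB₃ (1, true) = σ₂ := rfl
lemma letter_1f : letterB₃ (1, false) = σ₂⁻¹ := rfl

/-- `β` is represented by a word with no `σ₁⁻¹`. -/
def NoNegB₃ (β : B₃) : Prop :=
  ∃ w : List (Fin 2 × Bool), (w.map letterB₃).prod = β ∧ ((0 : Fin 2), false) ∉ w

lemma noneg_mul {a b : B₃} (ha : NoNegB₃ a) (hb : NoNegB₃ b) : NoNegB₃ (a * b) := by
  obtain ⟨u, hu, hu'⟩ := ha; obtain ⟨v, hv, hv'⟩ := hb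
  exact ⟨u ++ v, by simp [hu, hv], by simp [hu', hv']⟩

lemma pos_noneg {b : B₃} (hb : IsSigmaOnePositive b) : NoNegB₃ b := by
  obtain ⟨v, hv, _, hv'⟩ := hb; exact ⟨v, hv, hv'⟩

lemma pos_mul_noneg {a b : B₃} (ha : IsSigmaOnePositive a) (hb : NoNegB₃ b) :
    IsSigmaOnePositive (a * b) := by
  obtain ⟨u, hu, hut, hu'⟩ := ha; obtain ⟨v, hv, hv'⟩ := hb
  exact ⟨u ++ v, by simp [hu, hv], by simp [hut], by simp [hu', hv']⟩

lemma noneg_mul_pos {a b : B₃} (ha : NoNegB₃ a) (hb : IsSigmaOnePositive b) :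
    IsSigmaOnePositive (a * b) := by
  obtain ⟨u, hu, hu'⟩ := ha; obtain ⟨v, hv, hvt, hv'⟩ := hb
  exact ⟨u ++ v, by simp [hu, hv], by simp [hvt], by simp [hu', hv']⟩

lemma noneg_pow (m : ℕ) : NoNegB₃ (σ₂ ^ m) := by
  refine ⟨List.replicate m ((1 : Fin 2), true), ?_, ?_⟩
  · simp [letter_1t]
  · intro h; have := List.eq_of_mem_replicate h; simp at this

lemma noneg_pow_inv (m : ℕ) : NoNegB₃ ((σ₂ ^ m)⁻¹) := by
  refine ⟨List.replicate m ((1 : Fin 2), false), ?_, ?_⟩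
  · simp [letter_1f]
  · intro h; have := List.eq_of_mem_replicate h; simp at this

lemma noneg_zpow (n : ℤ) : NoNegB₃ (σ₂ ^ n) := by
  rcases le_or_gt 0 n with h | h
  · have : σ₂ ^ n = σ₂ ^ n.toNat := by rw [← zpow_natCast, Int.toNat_of_nonneg h]
    rw [this]; exact noneg_pow _
  · have : σ₂ ^ n = (σ₂ ^ (-n).toNat)⁻¹ := by
      rw [← zpow_natCast, Int.toNat_of_nonneg (by omega), ← zpow_neg, neg_neg]
    rw [this]; exact noneg_pow_inv _

lemma pos_conj : IsSigmaOnePositive (σ₂ * σ₁ * σ₂⁻¹) := by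
  refine ⟨[((1:Fin 2), true), ((0:Fin 2), true), ((1:Fin 2), false)], ?_, by simp, by simp⟩
  simp [letter_1t, letter_0t, letter_1f, mul_assoc]

lemma bump {m : ℕ} {z : B₃} (h : IsSigmaOnePositive (σ₁⁻¹ * σ₂ ^ m * z)) :
    IsSigmaOnePositive (σ₁⁻¹ * σ₂ ^ (m + 1) * z) := by
  have e : σ₁⁻¹ * σ₂ ^ (m + 1) * z = (σ₂ * σ₁ * σ₂⁻¹) * (σ₁⁻¹ * σ₂ ^ m * z) := by
    rw [← conj1, pow_succ']; group
  rw [e]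
  exact noneg_mul_pos (pos_noneg pos_conj) h

lemma key : ∀ w : List (Fin 2 × Bool), ((0 : Fin 2), false) ∉ w → ((0 : Fin 2), true) ∈ w →
    ∃ m : ℕ, IsSigmaOnePositive (σ₁⁻¹ * σ₂ ^ m * (w.map letterB₃).prod) := by
  intro w
  induction w with
  | nil => simp
  | cons l t ih =>
    intro hf ht
    have hfl : l ≠ ((0 : Fin 2), false) := by intro e; exact hf (by simp [e])
    have hft : ((0 : Fin 2), false) ∉ t := fun h => hf (by simp [h])
    by_cases hl : l = ((0 : Fin 2), true)
    · subst hl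
      refine ⟨1, ?_⟩
      have e : σ₁⁻¹ * σ₂ ^ 1 * ((((0 : Fin 2), true) :: t).map letterB₃).prod
          = (σ₂ * σ₁ * σ₂⁻¹) * (t.map letterB₃).prod := by
        simp only [List.map_cons, List.prod_cons, letter_0t, pow_one, ← conj1]
        group
      rw [e]
      exact pos_mul_noneg pos_conj ⟨t, rfl, hft⟩
    · have ht' : ((0 : Fin 2), true) ∈ t := by
        rcases List.mem_cons.mp ht with h | h
        · exact absurd h.symm hl
        · exact h
      obtain ⟨m, hm⟩ := ih hft ht'
      obtain ⟨i, b⟩ := l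
      have hi : i = 1 := by
        fin_cases i
        · exfalso; cases b
          · exact hfl rfl
          · exact hl rfl
        · rfl
      subst hi
      cases b
      · refine ⟨m + 1, ?_⟩
        have e : σ₁⁻¹ * σ₂ ^ (m + 1) * ((((1 : Fin 2), false) :: t).map letterB₃).prod
            = σ₁⁻¹ * σ₂ ^ m * (t.map letterB₃).prod := by
          simp only [List.map_cons, List.prod_cons, letter_1f, pow_succ]
          group
        rw [e]; exact hm
      · refine ⟨m, ?_⟩
        have e : σ₁⁻¹ * σ₂ ^ m * ((((1 : Fin 2), true) :: t).map letterB₃).prod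
            = σ₁⁻¹ * σ₂ ^ (m + 1) * (t.map letterB₃).prod := by
          simp only [List.map_cons, List.prod_cons, letter_1t, pow_succ]
          group
        rw [e]; exact bump hm

lemma exists_word (β : B₃) : ∃ w : List (Fin 2 × Bool), (w.map letterB₃).prod = β := by
  induction β using PresentedGroup.induction_on with
  | H z =>
    induction z using FreeGroup.induction_on with
    | C1 => exact ⟨[], by simp⟩
    | of x => exact ⟨[(x, true)], by simp [letterB₃]; rfl⟩
    | inv_of x _ => exact ⟨[(x, false)], by simp [letterB₃, map_inv]; rfl⟩
    | mul x y hx hy =>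
      obtain ⟨u, hu⟩ := hx; obtain ⟨v, hv⟩ := hy
      exact ⟨u ++ v, by simp [hu, hv, map_mul]⟩


/-- For a left order on `B₃` whose positive cone consists exactly of the
σ₁-positive elements together with the positive powers of σ₂ (i.e. the Dehornoy
ordering), the convex subgroups are exactly `{1}`, `⟨σ₂⟩` and `B₃`. -/
theorem stmt_13 (r : B₃ → B₃ → Prop) (hr : IsLeftOrder r)
    (hcone : {β : B₃ | r 1 β} =
      {β : B₃ | IsSigmaOnePositive β} ∪ {β : B₃ | ∃ k : ℕ, 1 ≤ k ∧ β = σ₂ ^ k}) :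
    ∀ C : Subgroup B₃, IsConvexSubgroup r C ↔
      (C = ⊥ ∨ C = Subgroup.zpowers σ₂ ∨ C = ⊤) := by
  obtain ⟨hsto, hinv⟩ := hr
  haveI := hsto
  have rshift : ∀ {f g : B₃}, r 1 (f⁻¹ * g) → r f g := by
    intro f g h; have := hinv f _ _ h; simpa using this
  have rshift' : ∀ {f g : B₃}, r f g → r 1 (f⁻¹ * g) := by
    intro f g h; have := hinv f⁻¹ _ _ h; simpa using this
  have rpos : ∀ {β : B₃}, IsSigmaOnePositive β → r 1 β :=
    fun h => (Set.ext_iff.mp hcone _).2 (Or.inl h)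
  have rp2 : ∀ k : ℕ, 1 ≤ k → r 1 (σ₂ ^ k) :=
    fun k hk => (Set.ext_iff.mp hcone _).2 (Or.inr ⟨k, hk, rfl⟩)
  have rcone : ∀ {β : B₃}, r 1 β →
      IsSigmaOnePositive β ∨ ∃ k : ℕ, 1 ≤ k ∧ β = σ₂ ^ k :=
    fun h => (Set.ext_iff.mp hcone _).1 h
  have hposzpow : ∀ {x : B₃} (n : ℤ), IsSigmaOnePositive x → r (σ₂ ^ n) x := by
    intro x n hx
    apply rshift
    have : IsSigmaOnePositive ((σ₂ ^ n)⁻¹ * x) := by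
      rw [← zpow_neg]
      exact noneg_mul_pos (noneg_zpow _) hx
    exact rpos this
  intro C
  constructor
  · intro hC
    by_cases hle : C ≤ Subgroup.zpowers σ₂
    · by_cases hbot : C = ⊥
      · exact Or.inl hbot
      right; left
      obtain ⟨g, hgC, hg1⟩ : ∃ g ∈ C, g ≠ 1 := by
        by_contra h
        push_neg at h
        exact hbot ((Subgroup.eq_bot_iff_forall C).mpr h)
      obtain ⟨n, hn⟩ := Subgroup.mem_zpowers_iff.mp (hle hgC)
      have hkey : ∃ k : ℕ, 1 ≤ k ∧ (σ₂ : B₃) ^ k ∈ C := by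
        rcases lt_trichotomy n 0 with h | h | h
        · refine ⟨(-n).toNat, by omega, ?_⟩
          have : (σ₂ : B₃) ^ (-n).toNat = g⁻¹ := by
            rw [← zpow_natCast, Int.toNat_of_nonneg (by omega), zpow_neg, hn]
          rw [this]; exact inv_mem hgC
        · exfalso; apply hg1; rw [← hn, h, zpow_zero]
        · refine ⟨n.toNat, by omega, ?_⟩
          have : (σ₂ : B₃) ^ n.toNat = g := by
            rw [← zpow_natCast, Int.toNat_of_nonneg (by omega), hn]
          rw [this]; exact hgC
      obtain ⟨k, hk1, hkC⟩ := hkey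
      have h2k : (σ₂ : B₃) ^ (k + k) ∈ C := by rw [pow_add]; exact mul_mem hkC hkC
      have hr1 : r 1 σ₂ := by have := rp2 1 le_rfl; rwa [pow_one] at this
      have hr2 : r σ₂ (σ₂ ^ (k + k)) := by
        apply rshift
        have e : σ₂⁻¹ * σ₂ ^ (k + k) = σ₂ ^ (k + k - 1) := by
          have h1 : k + k = (k + k - 1) + 1 := by omega
          calc σ₂⁻¹ * σ₂ ^ (k + k) = σ₂⁻¹ * (σ₂ * σ₂ ^ (k + k - 1)) := by
                rw [← pow_succ', ← h1]
            _ = σ₂ ^ (k + k - 1) := by rw [← mul_assoc, inv_mul_cancel, one_mul]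
        rw [e]; exact rp2 _ (by omega)
      have hσ₂C : σ₂ ∈ C := hC 1 σ₂ (σ₂ ^ (k + k)) (one_mem C) h2k hr1 hr2
      exact le_antisymm hle (Subgroup.zpowers_le.mpr hσ₂C)
    · right; right
      obtain ⟨g, hgC, hgz⟩ : ∃ g ∈ C, g ∉ Subgroup.zpowers σ₂ := by
        by_contra h
        push_neg at h
        exact hle h
      have hg1 : g ≠ 1 := fun e => hgz (e ▸ one_mem _)
      have hx : ∃ x ∈ C, IsSigmaOnePositive x := by
        rcases trichotomous_of r g 1 with h | h | h
        · have h' : r 1 (g⁻¹ * 1) := rshift' h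
          rw [mul_one] at h'
          rcases rcone h' with hp | ⟨k, _, he⟩
          · exact ⟨g⁻¹, inv_mem hgC, hp⟩
          · exfalso
            apply hgz
            have : g = (σ₂ ^ k)⁻¹ := by rw [← he]; group
            rw [this]
            exact inv_mem (Subgroup.mem_zpowers_iff.mpr ⟨k, by rw [zpow_natCast]⟩)
        · exact absurd h hg1
        · rcases rcone h with hp | ⟨k, _, he⟩
          · exact ⟨g, hgC, hp⟩
          · exact absurd (he ▸ Subgroup.mem_zpowers_iff.mpr ⟨k, by rw [zpow_natCast]⟩) hgz
      obtain ⟨x, hxC, hxpos⟩ := hx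
      obtain ⟨u, hu, hut, huf⟩ := hxpos
      have hs2x : IsSigmaOnePositive (σ₂⁻¹ * x) := by
        refine ⟨((1 : Fin 2), false) :: u, ?_, by simp [hut], by simp [huf]⟩
        simp [hu, letter_1f]
      have hr1 : r 1 σ₂ := by have := rp2 1 le_rfl; rwa [pow_one] at this
      have hσ₂C : σ₂ ∈ C := hC 1 σ₂ x (one_mem C) hxC hr1 (rshift (rpos hs2x))
      obtain ⟨m, hm⟩ := key u huf hut
      rw [hu] at hm
      set y := σ₂ ^ m * x with hy
      have hyC : y ∈ C := mul_mem (pow_mem hσ₂C m) hxC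
      have hry1 : r σ₁ y := by
        apply rshift
        have e : σ₁⁻¹ * y = σ₁⁻¹ * σ₂ ^ m * x := by rw [hy]; group
        rw [e]; exact rpos hm
      have hry2 : r y⁻¹ σ₁ := by
        apply rshift
        have e : (y⁻¹)⁻¹ * σ₁ = y * σ₁ := by group
        rw [e]
        apply rpos
        apply pos_mul_noneg
        · refine ⟨List.replicate m ((1 : Fin 2), true) ++ u, ?_, by simp [hut], ?_⟩
          · simp [hy, hu, letter_1t]
          · intro h
            rcases List.mem_append.mp h with h | h
            · have := List.eq_of_mem_replicate h; simp at this
            · exact huf h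
        · exact ⟨[((0 : Fin 2), true)], by simp [letter_0t], by simp⟩
      have hσ₁C : σ₁ ∈ C := hC y⁻¹ σ₁ y (inv_mem hyC) hyC hry2 hry1
      rw [Subgroup.eq_top_iff']
      intro β
      refine PresentedGroup.generated_by _ C (fun j => ?_) β
      fin_cases j
      · exact hσ₁C
      · exact hσ₂C
  · intro h
    rcases h with rfl | rfl | rfl
    · intro f g h hf hh h1 h2
      rw [Subgroup.mem_bot] at hf hh
      subst hf; subst hh
      exact absurd (trans_of r h1 h2) (irrefl_of r 1)
    · intro f g h hf hh h1 h2
      obtain ⟨a, ha⟩ := Subgroup.mem_zpowers_iff.mp hf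
      obtain ⟨b, hb⟩ := Subgroup.mem_zpowers_iff.mp hh
      have hx : r 1 (f⁻¹ * g) := rshift' h1
      rcases rcone hx with hp | ⟨k, _, he⟩
      · exfalso
        have h3 : r (f⁻¹ * g) (f⁻¹ * h) := hinv f⁻¹ _ _ h2
        have h4 : f⁻¹ * h = σ₂ ^ (b - a) := by
          rw [← ha, ← hb, ← zpow_neg, ← zpow_add]; ring_nf
        rw [h4] at h3
        exact absurd (trans_of r h3 (hposzpow _ hp)) (irrefl_of r _)
      · have hg : g = f * σ₂ ^ k := by
          have : f⁻¹ * g = σ₂ ^ k := he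
          rw [← this]; group
        rw [hg, ← ha]
        exact mul_mem (zpow_mem (Subgroup.mem_zpowers σ₂) a)
          (pow_mem (Subgroup.mem_zpowers σ₂) k)
    · intro f g h _ _ _ _
      exact Subgroup.mem_top g
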